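/- Let Γ be a discrete subring of ℂ containing 1, let z ∈ ℂ' and let (a_n)_{n≥0} be a continued fraction expansion of z over Γ with Q-pair (p_n), (q_n). Then |q_n| → ∞ as n → ∞. -/

import Mathlib

/-- The quotient field of a subring `Γ` of `ℂ`, as a subset of `ℂ`. -/
def quotField (Γ : Subring ℂ) : Set ℂ :=
  {x | ∃ p ∈ Γ, ∃ q ∈ Γ, q ≠ 0 ∧ x = p / q}

/-- `(a n)` is a continued fraction expansion of `z` over `Γ`, with iteration
sequence `(zs n)`: `zs 0 = z`, `0 < |zs n - a n| < 1` and `zs (n+1) = (zs n - a n)⁻¹`. -/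
def IsCFE (Γ : Subring ℂ) (z : ℂ) (a zs : ℕ → ℂ) : Prop :=
  (∀ n, a n ∈ Γ) ∧ zs 0 = z ∧
    (∀ n, 0 < ‖zs n - a n‖ ∧ ‖zs n - a n‖ < 1) ∧
    (∀ n, zs (n + 1) = (zs n - a n)⁻¹)

/-- The Q-pair of a sequence of partial quotients, with indices shifted by one:
`p (n+1)` is the paper's `p_n` and `q (n+1)` is the paper's `q_n`
(so `p 0 = p_{-1} = 1` and `q 0 = q_{-1} = 0`). -/
def IsQPair (a p q : ℕ → ℂ) : Prop :=
  p 0 = 1 ∧ p 1 = a 0 ∧ (∀ n, p (n + 2) = a (n + 1) * p (n + 1) + p n) ∧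
  q 0 = 0 ∧ q 1 = 1 ∧ (∀ n, q (n + 2) = a (n + 1) * q (n + 1) + q n)

/-- A bounded subset of a discrete subring of `ℂ` is finite. -/
lemma bounded_finite_aux (Γ : Subring ℂ) (hdisc : DiscreteTopology Γ) (C : ℝ) :
    {w : ℂ | w ∈ Γ ∧ ‖w‖ ≤ C}.Finite := by
  have hΓadd : DiscreteTopology Γ.toAddSubgroup := hdisc
  have hcl : IsClosed (Γ : Set ℂ) := AddSubgroup.isClosed_of_discrete (H := Γ.toAddSubgroup)
  have hset : {w : ℂ | w ∈ Γ ∧ ‖w‖ ≤ C}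
      = (Γ : Set ℂ) ∩ Metric.closedBall 0 C := by
    ext w
    simp [Metric.mem_closedBall, Complex.dist_eq]
  rw [hset]
  have hcomp : IsCompact ((Γ : Set ℂ) ∩ Metric.closedBall 0 C) :=
    Metric.isCompact_of_isClosed_isBounded (hcl.inter Metric.isClosed_closedBall)
      (Metric.isBounded_closedBall.subset Set.inter_subset_right)
  have hdisc' : DiscreteTopology ((Γ : Set ℂ) ∩ Metric.closedBall 0 C : Set ℂ) :=
    DiscreteTopology.of_subset hdisc Set.inter_subset_left
  exact hcomp.finite (isDiscrete_iff_discreteTopology.mpr hdisc')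

/-- Proposition 2.2: the absolute values of the denominators tend to infinity. -/
theorem stmt_1 (Γ : Subring ℂ) (hdisc : DiscreteTopology Γ)
    (z : ℂ) (hz : z ∉ quotField Γ)
    (a zs p q : ℕ → ℂ) (hcf : IsCFE Γ z a zs) (hpq : IsQPair a p q) :
    Filter.Tendsto (fun n => ‖q (n + 1)‖) Filter.atTop Filter.atTop := by
  obtain ⟨haΓ, hz0, habs, hzrec⟩ := hcf
  obtain ⟨hp0, hp1, hprec, hq0, hq1, hqrec⟩ := hpq
  set θ : ℕ → ℂ := fun n => q n * z - p n with hθ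
  have hεne : ∀ n, zs n - a n ≠ 0 := by
    intro n
    have := (habs n).1
    intro h
    rw [h] at this
    simp at this
  -- key recursion for θ
  have hθstep : ∀ n, θ (n + 1) = -(zs n - a n) * θ n := by
    intro n
    induction n with
    | zero =>
      simp only [hθ, hq1, hp1, hq0, hp0, hz0]
      ring
    | succ n ih =>
      have h2 : θ (n + 2) = a (n + 1) * θ (n + 1) + θ n := by
        simp only [hθ, hqrec n, hprec n]; ring
      have hθn : θ n = -(zs n - a n)⁻¹ * θ (n + 1) := by
        rw [ih, show -(zs n - a n)⁻¹ * (-(zs n - a n) * θ n)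
          = (zs n - a n)⁻¹ * ((zs n - a n) * θ n) by ring,
          inv_mul_cancel_left₀ (hεne n)]
      rw [h2, hθn, hzrec n]
      ring
  have hθne : ∀ n, θ n ≠ 0 := by
    intro n
    induction n with
    | zero => simp [hθ, hq0, hp0]
    | succ n ih =>
      rw [hθstep n]
      exact mul_ne_zero (neg_ne_zero.mpr (hεne n)) ih
  have hanti : StrictAnti (fun n => ‖θ n‖) := by
    apply strictAnti_nat_of_succ_lt
    intro n
    rw [hθstep n]
    simp only [norm_mul, norm_neg]
    have h1 : ‖zs n - a n‖ < 1 := (habs n).2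
    have h2 : 0 < ‖θ n‖ := (norm_pos_iff.mpr (hθne n))
    calc ‖zs n - a n‖ * ‖θ n‖
        < 1 * ‖θ n‖ := by exact mul_lt_mul_of_pos_right h1 h2
      _ = ‖θ n‖ := one_mul _
  have hθle1 : ∀ n, ‖θ n‖ ≤ 1 := by
    intro n
    have := hanti.antitone (Nat.zero_le n)
    simpa [hθ, hq0, hp0] using this
  -- membership of p, q in Γ
  have hmem : ∀ n, (p n ∈ Γ ∧ q n ∈ Γ) ∧ (p (n + 1) ∈ Γ ∧ q (n + 1) ∈ Γ) := by
    intro n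
    induction n with
    | zero =>
      refine ⟨⟨?_, ?_⟩, ?_, ?_⟩ <;> simp [hp0, hp1, hq0, hq1, haΓ 0, Γ.one_mem, Γ.zero_mem]
    | succ n ih =>
      refine ⟨ih.2, ?_, ?_⟩
      · rw [hprec n]
        exact Γ.add_mem (Γ.mul_mem (haΓ (n + 1)) ih.2.1) ih.1.1
      · rw [hqrec n]
        exact Γ.add_mem (Γ.mul_mem (haΓ (n + 1)) ih.2.2) ih.1.2
  -- injectivity of n ↦ (q (n+1), p (n+1))
  have hginj : Function.Injective (fun n => (q (n + 1), p (n + 1))) := by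
    intro m n h
    simp only [Prod.mk.injEq] at h
    have hθeq : θ (m + 1) = θ (n + 1) := by simp [hθ, h.1, h.2]
    have := hanti.injective (congrArg (fun x : ℂ => ‖x‖) hθeq)
    omega
  rw [Filter.tendsto_atTop]
  intro M
  have hfin : {n : ℕ | ‖q (n + 1)‖ < M}.Finite := by
    set K : Set (ℂ × ℂ) :=
      {w : ℂ | w ∈ Γ ∧ ‖w‖ ≤ M} ×ˢ
        {w : ℂ | w ∈ Γ ∧ ‖w‖ ≤ M * ‖z‖ + 1} with hK
    have hKfin : K.Finite :=
      (bounded_finite_aux Γ hdisc M).prod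
        (bounded_finite_aux Γ hdisc (M * ‖z‖ + 1))
    have hsub : {n : ℕ | ‖q (n + 1)‖ < M}
        ⊆ (fun n => (q (n + 1), p (n + 1))) ⁻¹' K := by
      intro n hn
      simp only [Set.mem_setOf_eq] at hn
      simp only [Set.mem_preimage, hK, Set.mem_prod, Set.mem_setOf_eq]
      constructor
      · exact ⟨(hmem n).2.2, hn.le⟩
      · refine ⟨(hmem n).2.1, ?_⟩
        have hpz : p (n + 1) = q (n + 1) * z - θ (n + 1) := by simp [hθ]
        rw [hpz]
        calc ‖q (n + 1) * z - θ (n + 1)‖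
            ≤ ‖q (n + 1) * z‖ + ‖θ (n + 1)‖ := by
              simpa using (norm_sub_le (q (n+1) * z) (θ (n+1)))
          _ ≤ M * ‖z‖ + 1 := by
              rw [norm_mul]
              gcongr
              all_goals first | exact hθle1 _ | exact hn.le
    exact (hKfin.preimage hginj.injOn).subset hsub
  have : ∀ᶠ n in Filter.cofinite, M ≤ ‖q (n + 1)‖ := by
    rw [Filter.eventually_cofinite]
    simpa [not_le] using hfin
  rw [← Nat.cofinite_eq_atTop]
  exact this
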